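/- Let n ≥ 1 and let 0 < p_1 ≤ p_2 ≤ … ≤ p_n be reals, with the convention p_0 = 0. For any nonnegative reals y_1,…,y_n satisfying the nested constraints ∑_{j=1}^i y_j ≤ p_i for every i ∈ {1,…,n}, one has ∑_{i=1}^n y_i/p_i ≤ ∑_{i=1}^n (p_i − p_{i−1})/p_i; moreover this bound is attained by y_i = p_i − p_{i−1}. -/

import Mathlib

open Finset

lemma tele10 (p : ℕ → ℝ) (hp0 : p 0 = 0) (i : ℕ) :
    ∑ j ∈ Icc 1 i, (p j - p (j-1)) = p i := by
  induction i with
  | zero => simp [hp0]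
  | succ k ih =>
    rw [Finset.sum_Icc_succ_top (by omega), ih]
    simp

lemma aux10 (p y : ℕ → ℝ) (hp0 : p 0 = 0) (n : ℕ) (hn : 1 ≤ n)
    (hppos : ∀ i, 1 ≤ i → i ≤ n → 0 < p i)
    (hpmono : ∀ i, 1 ≤ i → i < n → p i ≤ p (i+1))
    (hy : ∀ i, 1 ≤ i → i ≤ n → 0 ≤ y i)
    (hcon : ∀ i, 1 ≤ i → i ≤ n → ∑ j ∈ Icc 1 i, y j ≤ p i) :
    ∑ i ∈ Icc 1 n, y i / p i + (p n - ∑ j ∈ Icc 1 n, y j) / p n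
      ≤ ∑ i ∈ Icc 1 n, (p i - p (i-1)) / p i := by
  induction n, hn using Nat.le_induction with
  | base =>
    have h1 : (0:ℝ) < p 1 := hppos 1 le_rfl le_rfl
    simp only [Icc_self, sum_singleton, hp0, sub_zero]
    rw [← add_div]
    ring_nf
    exact le_rfl
  | succ n hn ih =>
    have hpn : 0 < p n := hppos n hn (by omega)
    have hpn1 : 0 < p (n+1) := hppos (n+1) (by omega) le_rfl
    have hmon : p n ≤ p (n+1) := hpmono n hn (by omega)
    have hSn : ∑ j ∈ Icc 1 n, y j ≤ p n := hcon n hn (by omega)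
    have IH := ih (fun i h1 h2 => hppos i h1 (by omega))
      (fun i h1 h2 => hpmono i h1 (by omega))
      (fun i h1 h2 => hy i h1 (by omega))
      (fun i h1 h2 => hcon i h1 (by omega))
    have key : (p n - ∑ j ∈ Icc 1 n, y j) / p (n+1)
        ≤ (p n - ∑ j ∈ Icc 1 n, y j) / p n := by
      apply div_le_div_of_nonneg_left (by linarith) hpn hmon
    rw [Finset.sum_Icc_succ_top (by omega : 1 ≤ n+1),
        Finset.sum_Icc_succ_top (by omega : 1 ≤ n+1),
        Finset.sum_Icc_succ_top (by omega : 1 ≤ n+1)]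
    simp only [sub_div, add_div] at key IH ⊢
    rw [div_self hpn.ne', div_self hpn1.ne'] at *
    simp only [Nat.add_sub_cancel]
    linarith [key, IH]

theorem stmt10 (n : ℕ) (hn : 1 ≤ n) (p : ℕ → ℝ) (hp0 : p 0 = 0)
    (hppos : ∀ i, 1 ≤ i → i ≤ n → 0 < p i)
    (hpmono : ∀ i, 1 ≤ i → i < n → p i ≤ p (i+1))
    (y : ℕ → ℝ) (hy : ∀ i, 1 ≤ i → i ≤ n → 0 ≤ y i)
    (hcon : ∀ i, 1 ≤ i → i ≤ n → ∑ j ∈ Finset.Icc 1 i, y j ≤ p i) :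
    (∑ i ∈ Finset.Icc 1 n, y i / p i ≤
      ∑ i ∈ Finset.Icc 1 n, (p i - p (i-1)) / p i) ∧
    (∀ i, 1 ≤ i → i ≤ n → 0 ≤ p i - p (i-1)) ∧
    (∀ i, 1 ≤ i → i ≤ n → ∑ j ∈ Finset.Icc 1 i, (p j - p (j-1)) ≤ p i) := by
  refine ⟨?_, ?_, ?_⟩
  · have h := aux10 p y hp0 n hn hppos hpmono hy hcon
    have hpn : 0 < p n := hppos n hn le_rfl
    have hSn : ∑ j ∈ Icc 1 n, y j ≤ p n := hcon n hn le_rfl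
    have : 0 ≤ (p n - ∑ j ∈ Icc 1 n, y j) / p n :=
      div_nonneg (by linarith) hpn.le
    linarith
  · intro i h1 h2
    rcases Nat.eq_or_lt_of_le h1 with h | h
    · have := hppos 1 le_rfl (by omega)
      rw [← h]; simp [hp0]; linarith
    · have := hpmono (i-1) (by omega) (by omega)
      have hi : i - 1 + 1 = i := by omega
      rw [hi] at this
      linarith
  · intro i h1 h2
    rw [tele10 p hp0 i]
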